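/- Let n ≥ 1, let p* ∈ (0,∞)^n, let w_i > 0, let f ≥ 1, γ ≥ 1 and 0 < α ≤ 1. Let x_i : (0,∞)^n → (0,∞) satisfy: (i) x_i(p*) = w_i; (ii) x_i is nonincreasing in each coordinate j ≠ i (all other goods are complements of good i); (iii) for every price vector p and every scalar q > 1, x_i(q·p) ≥ x_i(p)/q^γ; (iv) for every price vector p and every 0 < t < 1, replacing the i-th coordinate p_i of p by t·p_i changes the value of x_i to at least x_i(p)·t^{−α}. Then for every f-bounded price vector p whose i-th coordinate satisfies p_i = r·p_i*/f with 1 ≤ r ≤ f², one has x_i(p) ≥ w_i · f^{2α−γ} · r^{−α}. -/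

import Mathlib

/-- Lemma 3, part 1 (f-bounded demand lower bound in a market of complements):
if `x_i(p*) = w_i`, `x_i` is nonincreasing in every coordinate `j ≠ i`,
raising all prices by a factor `q > 1` lowers `x_i` by at most a factor `q^γ`,
and lowering the single price `p_i` by a factor `t < 1` raises `x_i` by at least
the factor `t^{−α}`, then for any `f`-bounded price vector with
`p_i = r·p_i*/f`, `1 ≤ r ≤ f²`, we have `x_i(p) ≥ w_i·f^{2α−γ}·r^{−α}`. -/
theorem stmt8 (n : ℕ) (hn : 1 ≤ n) (i : Fin n)
    (pstar : Fin n → ℝ) (hpstar : ∀ j, 0 < pstar j)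
    (w f γ α : ℝ) (hw : 0 < w) (hf : 1 ≤ f) (hγ : 1 ≤ γ)
    (hα0 : 0 < α) (hα1 : α ≤ 1)
    (x : (Fin n → ℝ) → ℝ)
    (hxpos : ∀ p : Fin n → ℝ, (∀ j, 0 < p j) → 0 < x p)
    (heq : x pstar = w)
    (hcompl : ∀ p : Fin n → ℝ, (∀ j, 0 < p j) → ∀ j, j ≠ i →
      ∀ c : ℝ, p j ≤ c → x (Function.update p j c) ≤ x p)
    (hincome : ∀ p : Fin n → ℝ, (∀ j, 0 < p j) → ∀ q : ℝ, 1 < q →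
      x p / q ^ γ ≤ x (fun j => q * p j))
    (hprice : ∀ p : Fin n → ℝ, (∀ j, 0 < p j) → ∀ t : ℝ, 0 < t → t < 1 →
      x p * t ^ (-α) ≤ x (Function.update p i (t * p i))) :
    ∀ p : Fin n → ℝ, (∀ j, pstar j / f ≤ p j ∧ p j ≤ f * pstar j) →
      ∀ r : ℝ, 1 ≤ r → r ≤ f ^ 2 → p i = r * pstar i / f →
      w * f ^ (2 * α - γ) * r ^ (-α) ≤ x p := by
  intro p hp r hr1 hr2 hpi
  have hf0 : (0:ℝ) < f := lt_of_lt_of_le one_pos hf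
  have hr0 : (0:ℝ) < r := lt_of_lt_of_le one_pos hr1
  have hppos : ∀ j, 0 < p j := fun j =>
    lt_of_lt_of_le (div_pos (hpstar j) hf0) (hp j).1
  set P : Fin n → ℝ := fun j => f * pstar j with hP
  have hPpos : ∀ j, 0 < P j := fun j => mul_pos hf0 (hpstar j)
  -- Step 1: x P ≥ w / f^γ
  have step1 : w / f ^ γ ≤ x P := by
    rcases eq_or_lt_of_le hf with h1 | h1
    · have hPe : P = pstar := by funext j; simp [hP, ← h1]
      rw [hPe, heq, ← h1, Real.one_rpow, div_one]
    · have h := hincome pstar hpstar f h1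
      rwa [heq] at h
  -- Step 2: lower coordinate i
  set t : ℝ := r / f ^ 2 with ht
  have hf2 : (0:ℝ) < f ^ 2 := by positivity
  have ht0 : 0 < t := div_pos hr0 hf2
  have ht1 : t ≤ 1 := (div_le_one hf2).mpr hr2
  have htPi : t * P i = p i := by
    rw [hpi, ht, hP]; field_simp
  set Q := Function.update P i (p i) with hQ
  have step2 : x P * t ^ (-α) ≤ x Q := by
    rcases eq_or_lt_of_le ht1 with h1 | h1
    · have hQP : Q = P := by
        rw [hQ, ← htPi, h1, one_mul]; exact Function.update_eq_self i P
      rw [hQP, h1, Real.one_rpow, mul_one]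
    · have h := hprice P hPpos t ht0 h1
      rwa [htPi] at h
  have hQpos : ∀ j, 0 < Q j := by
    intro j; rw [hQ]
    rcases eq_or_ne j i with h | h
    · subst h; rw [Function.update_self]; exact hppos _
    · rw [Function.update_of_ne h]; exact hPpos j
  -- Step 3: monotonicity in coordinates ≠ i
  have mono : ∀ s : Finset (Fin n), i ∉ s →
      x (fun j => if j ∈ s then Q j else p j) ≤ x p := by
    intro s
    induction s using Finset.induction_on with
    | empty => intro _; simp
    | @insert a s has ih =>
      intro hins
      have hai : a ≠ i := by rintro rfl; exact hins (Finset.mem_insert_self a s)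
      have his : i ∉ s := fun h => hins (Finset.mem_insert_of_mem h)
      have hgpos : ∀ j, 0 < (fun j => if j ∈ s then Q j else p j) j := by
        intro j; by_cases hj : j ∈ s <;> simp [hj, hQpos j, hppos j]
      have hfe : (fun j => if j ∈ insert a s then Q j else p j)
          = Function.update (fun j => if j ∈ s then Q j else p j) a (Q a) := by
        funext j
        rcases eq_or_ne j a with rfl | hj
        · simp [has]
        · simp [Function.update_of_ne hj, Finset.mem_insert, hj]
      have hpa : (fun j => if j ∈ s then Q j else p j) a ≤ Q a := by
        simp only [has, if_neg has]
        rw [hQ, Function.update_of_ne hai]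
        exact (hp a).2
      calc x (fun j => if j ∈ insert a s then Q j else p j)
          = x (Function.update (fun j => if j ∈ s then Q j else p j) a (Q a)) := by rw [hfe]
        _ ≤ x (fun j => if j ∈ s then Q j else p j) :=
            hcompl _ hgpos a hai (Q a) hpa
        _ ≤ x p := ih his
  have step3 : x Q ≤ x p := by
    have hi : i ∉ Finset.univ.erase i := Finset.notMem_erase i _
    have hfe : (fun j => if j ∈ Finset.univ.erase i then Q j else p j) = Q := by
      funext j
      rcases eq_or_ne j i with rfl | hj
      · simp [hQ]
      · simp [Finset.mem_erase, hj]
    have := mono (Finset.univ.erase i) hi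
    rwa [hfe] at this
  -- Arithmetic identity
  have hteq : t ^ (-α) = r ^ (-α) * f ^ (2 * α) := by
    rw [ht, Real.div_rpow hr0.le hf2.le]
    rw [show ((f ^ 2 : ℝ)) = f ^ (2:ℝ) by
      rw [← Real.rpow_natCast f 2]; norm_num]
    rw [← Real.rpow_mul hf0.le]
    rw [show (2:ℝ) * (-α) = -(2*α) by ring, Real.rpow_neg hf0.le, division_def, inv_inv]
  have key : w * f ^ (2 * α - γ) * r ^ (-α) = (w / f ^ γ) * t ^ (-α) := by
    rw [hteq, Real.rpow_sub hf0]
    field_simp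
  rw [key]
  calc (w / f ^ γ) * t ^ (-α) ≤ x P * t ^ (-α) := by
        apply mul_le_mul_of_nonneg_right step1 (Real.rpow_nonneg ht0.le _)
    _ ≤ x Q := step2
    _ ≤ x p := step3
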